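/- Let ρ̄ be a probability density, η ∈ (0,1), and ρ⁺(λ) ∝ ρ̄(λ)exp(−η g(λ)) the entropic mirror-descent iterate with g = δL(ρ̄). If L satisfies the relative smoothness bound L(ρ') − L(ρ̄) ≤ ∫ g·(ρ' − ρ̄) + KL(ρ', ρ̄) for all ρ', then L(ρ⁺) − L(ρ̄) ≤ −(1/η − 1)·KL(ρ⁺, ρ̄) − KL(ρ̄, ρ⁺). -/

import Mathlib

open MeasureTheory

/-- KL divergence between two densities, `KL(p, q) = ∫ p log(p/q)`. -/
noncomputable def KLdiv {X : Type*} [MeasureSpace X] (p q : X → ℝ) : ℝ :=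
  ∫ x, p x * Real.log (p x / q x)

/-- Mirror-descent decrease lemma: if `ρ⁺ ∝ ρ̄ exp(−η g)` with `g = δL(ρ̄)`,
`η ∈ (0,1)`, and `L` satisfies the relative smoothness bound
`L(ρ') − L(ρ̄) ≤ ∫ g (ρ' − ρ̄) + KL(ρ', ρ̄)` for all probability densities `ρ'`,
then `L(ρ⁺) − L(ρ̄) ≤ −(1/η − 1) KL(ρ⁺, ρ̄) − KL(ρ̄, ρ⁺)`. -/
theorem mirror_descent_decrease {Ω : Type*} [MeasureSpace Ω]
    (L : (Ω → ℝ) → ℝ) (ρbar g : Ω → ℝ) (η : ℝ) (hη : 0 < η) (hη1 : η < 1)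
    (hρbar : Measurable ρbar) (hρbar0 : ∀ l, 0 ≤ ρbar l) (hρbar1 : ∫ l, ρbar l = 1)
    (hg : Measurable g) (hgbd : ∃ C, ∀ l, |g l| ≤ C)
    (Z : ℝ) (hZ : Z = ∫ l, ρbar l * Real.exp (-η * g l))
    (ρplus : Ω → ℝ) (hρplus : ∀ l, ρplus l = ρbar l * Real.exp (-η * g l) / Z)
    (hKL1 : Integrable (fun l => ρplus l * Real.log (ρplus l / ρbar l)))
    (hKL2 : Integrable (fun l => ρbar l * Real.log (ρbar l / ρplus l)))
    (hint : Integrable (fun l => g l * (ρplus l - ρbar l)))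
    (hsmooth : ∀ ρ' : Ω → ℝ, Measurable ρ' → (∀ l, 0 ≤ ρ' l) → (∫ l, ρ' l = 1) →
      Integrable (fun l => g l * (ρ' l - ρbar l)) →
      Integrable (fun l => ρ' l * Real.log (ρ' l / ρbar l)) →
      L ρ' - L ρbar ≤ (∫ l, g l * (ρ' l - ρbar l)) + KLdiv ρ' ρbar)
    (hρplusmeas : Measurable ρplus) (hρplus0 : ∀ l, 0 ≤ ρplus l)
    (hρplus1 : ∫ l, ρplus l = 1) :
    L ρplus - L ρbar ≤ -(1 / η - 1) * KLdiv ρplus ρbar - KLdiv ρbar ρplus := by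
  obtain ⟨C, hC⟩ := hgbd
  have hNe : Nonempty Ω := by
    by_contra h
    rw [not_nonempty_iff] at h
    rw [integral_of_isEmpty] at hρbar1; norm_num at hρbar1
  have hC0 : 0 ≤ C := le_trans (abs_nonneg _) (hC hNe.some)
  -- integrability of ρbar, ρplus
  have hρbar_int : Integrable ρbar := by
    by_contra h
    rw [integral_undef h] at hρbar1; norm_num at hρbar1
  have hρplus_int : Integrable ρplus := by
    by_contra h
    rw [integral_undef h] at hρplus1; norm_num at hρplus1
  -- integrability of ρbar * exp(-η g)
  have hmeas : Measurable fun l => ρbar l * Real.exp (-η * g l) := by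
    exact hρbar.mul ((hg.const_mul (-η)).exp)
  have hexp_bdd : ∀ l, Real.exp (-η * g l) ≤ Real.exp (η * C) := by
    intro l
    apply Real.exp_le_exp.2
    have := (abs_le.1 (hC l)).1
    nlinarith
  have hZint : Integrable fun l => ρbar l * Real.exp (-η * g l) := by
    apply Integrable.mono' (hρbar_int.const_mul (Real.exp (η * C)))
      hmeas.aestronglyMeasurable
    filter_upwards with l
    rw [Real.norm_eq_abs, abs_of_nonneg (mul_nonneg (hρbar0 l) (Real.exp_nonneg _))]
    calc ρbar l * Real.exp (-η * g l) ≤ ρbar l * Real.exp (η * C) :=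
          mul_le_mul_of_nonneg_left (hexp_bdd l) (hρbar0 l)
      _ = Real.exp (η * C) * ρbar l := mul_comm _ _
  -- Z > 0
  have hZpos : 0 < Z := by
    have hlow : ∀ l, Real.exp (-η * C) * ρbar l ≤ ρbar l * Real.exp (-η * g l) := by
      intro l
      rw [mul_comm]
      apply mul_le_mul_of_nonneg_left _ (hρbar0 l)
      apply Real.exp_le_exp.2
      have := (abs_le.1 (hC l)).2
      nlinarith
    have : Real.exp (-η * C) * 1 ≤ Z := by
      rw [hZ, ← hρbar1, ← integral_const_mul]
      exact integral_mono (hρbar_int.const_mul _) hZint hlow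
    have := Real.exp_pos (-η * C)
    linarith
  -- pointwise key identity
  have fkey : ∀ l, (-η * g l - Real.log Z) * (ρplus l - ρbar l)
      = ρplus l * Real.log (ρplus l / ρbar l) + ρbar l * Real.log (ρbar l / ρplus l) := by
    intro l
    rcases (hρbar0 l).eq_or_lt with h0 | hpos
    · have h1 : ρplus l = 0 := by rw [hρplus l, ← h0]; ring
      rw [h1, ← h0]; ring
    · have hplpos : 0 < ρplus l := by
        rw [hρplus l]
        positivity
      have hratio : ρplus l / ρbar l = Real.exp (-η * g l) / Z := by
        rw [hρplus l]; field_simp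
      have hlog : Real.log (ρplus l / ρbar l) = -η * g l - Real.log Z := by
        rw [hratio, Real.log_div (Real.exp_ne_zero _) (ne_of_gt hZpos), Real.log_exp]
      have hlog2 : Real.log (ρbar l / ρplus l) = -(-η * g l - Real.log Z) := by
        rw [← hlog, ← Real.log_inv, inv_div]
      rw [hlog, hlog2]; ring
  -- the mirror descent identity
  set I := ∫ l, g l * (ρplus l - ρbar l) with hI
  set K1 := KLdiv ρplus ρbar with hK1
  set K2 := KLdiv ρbar ρplus with hK2
  have hdiff_int : Integrable fun l => ρplus l - ρbar l := hρplus_int.sub hρbar_int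
  have hdiff0 : ∫ l, (ρplus l - ρbar l) = 0 := by
    rw [integral_sub hρplus_int hρbar_int, hρplus1, hρbar1]; ring
  have hkey : -η * I = K1 + K2 := by
    have lhs : ∫ l, (-η * g l - Real.log Z) * (ρplus l - ρbar l) = -η * I := by
      have : ∀ l, (-η * g l - Real.log Z) * (ρplus l - ρbar l)
          = -η * (g l * (ρplus l - ρbar l)) - Real.log Z * (ρplus l - ρbar l) := by
        intro l; ring
      rw [integral_congr_ae (Filter.Eventually.of_forall this),
        integral_sub (hint.const_mul _) (hdiff_int.const_mul _),
        integral_const_mul, integral_const_mul, hdiff0]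
      ring
    have rhs : ∫ l, (-η * g l - Real.log Z) * (ρplus l - ρbar l) = K1 + K2 := by
      rw [integral_congr_ae (Filter.Eventually.of_forall fkey),
        integral_add hKL1 hKL2]
      rfl
    rw [← lhs, rhs]
  -- nonnegativity of K2
  have hK2nonneg : 0 ≤ K2 := by
    have hpt : ∀ l, ρbar l - ρplus l ≤ ρbar l * Real.log (ρbar l / ρplus l) := by
      intro l
      rcases (hρbar0 l).eq_or_lt with h0 | hpos
      · rw [← h0]
        simp [hρplus0 l]
      · have hplpos : 0 < ρplus l := by rw [hρplus l]; positivity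
        have h1 : Real.log (ρplus l / ρbar l) ≤ ρplus l / ρbar l - 1 :=
          Real.log_le_sub_one_of_pos (by positivity)
        have h2 : Real.log (ρbar l / ρplus l) = -Real.log (ρplus l / ρbar l) := by
          rw [← Real.log_inv, inv_div]
        rw [h2]
        have h3 : ρplus l / ρbar l - 1 = (ρplus l - ρbar l) / ρbar l := by
          field_simp
        rw [h3] at h1
        have := mul_le_mul_of_nonneg_left h1 (hρbar0 l)
        rw [mul_div_cancel₀ _ (ne_of_gt hpos)] at this
        nlinarith
    have : ∫ l, (ρbar l - ρplus l) ≤ ∫ l, ρbar l * Real.log (ρbar l / ρplus l) :=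
      integral_mono (hρbar_int.sub hρplus_int) hKL2 hpt
    rw [integral_sub hρbar_int hρplus_int, hρbar1, hρplus1] at this
    exact (by simpa using this : 0 ≤ ∫ l, ρbar l * Real.log (ρbar l / ρplus l))
  -- apply smoothness
  have hsm := hsmooth ρplus hρplusmeas hρplus0 hρplus1 hint hKL1
  rw [← hI, ← hK1] at hsm
  have hIval : I = -(1 / η) * (K1 + K2) := by
    rw [← hkey]; field_simp
  rw [hIval] at hsm
  have h1η : 1 < 1 / η := (one_lt_div hη).2 hη1
  nlinarith [hsm, mul_le_mul_of_nonneg_right (le_of_lt h1η) hK2nonneg]
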